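/- Let T be a tree on n ≥ 4 vertices and let u, v, w be three distinct vertices of T such that uv is an edge of T, u has degree 1 in T, deg_T(w) ≥ deg_T(v), and the distance between v and w in T is 2. Let T' = T − uv + uw be the tree obtained from T by deleting the edge uv and adding the edge uw. Then S_i(T) = S_i(T') for i = 0, 1, 2, 3 and S_4(T) < S_4(T'); in particular T ≺_s T'. -/

import Mathlib

open SimpleGraph

open scoped Classical in
/-- The adjacency matrix of a simple graph, with real entries. -/
noncomputable def adjMat {V : Type*} [Fintype V] (G : SimpleGraph V) : Matrix V V ℝ :=
  Matrix.of fun a b => if G.Adj a b then 1 else 0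

/-- The `k`-th spectral moment `S_k(G) = tr(A(G)^k)`. -/
noncomputable def spectralMoment {V : Type*} [Fintype V] [DecidableEq V]
    (G : SimpleGraph V) (k : ℕ) : ℝ :=
  Matrix.trace (adjMat G ^ k)

/-- `SLt G₁ G₂` means `G₁ ≺_s G₂`: for some `k` with `1 ≤ k ≤ n - 1`,
`S_i(G₁) = S_i(G₂)` for all `i < k` and `S_k(G₁) < S_k(G₂)`. -/
def SLt {V : Type*} [Fintype V] [DecidableEq V] (G₁ G₂ : SimpleGraph V) : Prop :=
  ∃ k : ℕ, 1 ≤ k ∧ k ≤ Fintype.card V - 1 ∧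
    (∀ i < k, spectralMoment G₁ i = spectralMoment G₂ i) ∧
    spectralMoment G₁ k < spectralMoment G₂ k

open Matrix in
private lemma trace_mul_single {V : Type*} [Fintype V] [DecidableEq V]
    (M : Matrix V V ℝ) (i j : V) :
    (M * Matrix.single i j (1:ℝ)).trace = M j i := by
  rw [Matrix.trace]
  rw [Finset.sum_eq_single j]
  · simp
  · intro b _ hb
    simp [Matrix.diag, hb]
  · simp

open Matrix in
private lemma stdBasis_trace {V : Type*} [Fintype V] [DecidableEq V] (i j : V) :
    (Matrix.single i j (1:ℝ)).trace = if j = i then 1 else 0 := by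
  rw [← one_mul (Matrix.single i j (1:ℝ)), _root_.trace_mul_single]
  simp [Matrix.one_apply]

open Matrix in
private lemma mul_single_apply {V : Type*} [Fintype V] [DecidableEq V]
    (M : Matrix V V ℝ) (i j a b : V) :
    (M * Matrix.single i j (1:ℝ)) a b = if b = j then M a i else 0 := by
  by_cases h : b = j
  · subst h; simp
  · simp [h]

open Matrix in
private lemma single_mul_apply {V : Type*} [Fintype V] [DecidableEq V]
    (M : Matrix V V ℝ) (i j a b : V) :
    (Matrix.single i j (1:ℝ) * M) a b = if a = i then M j b else 0 := by
  by_cases h : a = i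
  · subst h; simp
  · simp [h]

/-- Operation I. Let `T` be a tree on `n ≥ 4` vertices and `u, v, w`
distinct vertices with `uv ∈ E(T)`, `deg_T(u) = 1`, `deg_T(w) ≥ deg_T(v)` and
`dist_T(v, w) = 2`. If `T' = T - uv + uw`, then `S_i(T) = S_i(T')` for `i = 0,1,2,3`,
`S_4(T) < S_4(T')`, and `T ≺_s T'`. -/
theorem stmt_0 {V : Type*} [Fintype V] [DecidableEq V] (n : ℕ) (hn : 4 ≤ n)
    (hcard : Fintype.card V = n) (T : SimpleGraph V) (hT : T.IsTree)
    (u v w : V) (huv : u ≠ v) (huw : u ≠ w) (hvw : v ≠ w)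
    (hadj : T.Adj u v)
    (hdegu : (T.neighborSet u).ncard = 1)
    (hdeg : (T.neighborSet v).ncard ≤ (T.neighborSet w).ncard)
    (hdist : T.dist v w = 2)
    (T' : SimpleGraph V)
    (hT' : T' = SimpleGraph.fromEdgeSet ((T.edgeSet \ {s(u, v)}) ∪ {s(u, w)})) :
    (∀ i < 4, spectralMoment T i = spectralMoment T' i) ∧
    spectralMoment T 4 < spectralMoment T' 4 ∧ SLt T T' := by
  classical
  subst hcard
  -- u's unique neighbour is v
  have hu : ∀ z, T.Adj u z ↔ z = v := by
    obtain ⟨a, ha⟩ := Set.ncard_eq_one.mp hdegu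
    have hv : v ∈ T.neighborSet u := hadj
    rw [ha, Set.mem_singleton_iff] at hv
    intro z
    constructor
    · intro hz
      have hz' : z ∈ T.neighborSet u := hz
      rw [ha, Set.mem_singleton_iff] at hz'
      rw [hz', ← hv]
    · rintro rfl; exact hadj
  have hAdj_uw : ¬ T.Adj u w := by
    rw [hu]; exact fun h => hvw h.symm
  have hAdj_vw : ¬ T.Adj v w := by
    intro h
    have h2 := SimpleGraph.dist_le h.toWalk
    simp [hdist] at h2
  -- the common neighbour x of v and w
  have hx : ∃ x, T.Adj v x ∧ T.Adj x w := by
    obtain ⟨p, hp⟩ := hT.isConnected.exists_walk_length_eq_dist v w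
    rw [hdist] at hp
    cases p with
    | nil => simp at hp
    | cons h q =>
      cases q with
      | nil => simp at hp
      | cons h' r =>
        cases r with
        | nil => exact ⟨_, h, h'⟩
        | cons h'' s => simp [SimpleGraph.Walk.length_cons] at hp
  obtain ⟨x, hvx, hxw⟩ := hx
  have huniq : ∀ y, T.Adj v y → T.Adj y w → y = x := by
    have hpath : ∀ y (h1 : T.Adj v y) (h2 : T.Adj y w),
        (SimpleGraph.Walk.cons h1 (SimpleGraph.Walk.cons h2 SimpleGraph.Walk.nil)).IsPath := by
      intro y h1 h2
      simp [SimpleGraph.Walk.isPath_def, h1.ne, h2.ne, hvw]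
    intro y h1 h2
    obtain ⟨P, -, hPu⟩ := hT.existsUnique_path v w
    have e1 := hPu _ (hpath y h1 h2)
    have e2 := hPu _ (hpath x hvx hxw)
    have e3 := congrArg SimpleGraph.Walk.support (e1.trans e2.symm)
    simpa using e3
  have hxu : x ≠ u := fun h => hAdj_uw (h ▸ hxw)
  -- n ≥ 5
  have hn5 : 5 ≤ Fintype.card V := by
    by_contra hlt
    push_neg at hlt
    have h4 : Fintype.card V = 4 := by omega
    have hcard4 : ({u, v, w, x} : Finset V).card = 4 := by
      rw [Finset.card_insert_of_notMem (by simp [huv, huw, hxu.symm]),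
        Finset.card_insert_of_notMem (by simp [hvw, hvx.ne]),
        Finset.card_insert_of_notMem (by simp [hxw.ne']), Finset.card_singleton]
    have huniv : ({u, v, w, x} : Finset V) = Finset.univ :=
      Finset.eq_univ_of_card _ (by rw [hcard4, h4])
    have hsubw : T.neighborSet w ⊆ {x} := by
      intro z hz
      have hz' : T.Adj w z := hz
      have hzm : z ∈ ({u, v, w, x} : Finset V) := huniv ▸ Finset.mem_univ z
      simp only [Finset.mem_insert, Finset.mem_singleton] at hzm
      rcases hzm with rfl | rfl | rfl | rfl
      · exact absurd hz'.symm hAdj_uw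
      · exact absurd hz'.symm hAdj_vw
      · exact absurd hz' (T.irrefl)
      · rfl
    have h1 : (T.neighborSet w).ncard ≤ 1 := by
      simpa using Set.ncard_le_ncard hsubw (Set.finite_singleton x)
    have h2 : 2 ≤ (T.neighborSet v).ncard := by
      have hsub : ({u, x} : Set V) ⊆ T.neighborSet v := by
        rintro z (rfl | rfl)
        · exact hadj.symm
        · exact hvx
      have := Set.ncard_le_ncard hsub (T.neighborSet v).toFinite
      rwa [Set.ncard_pair (Ne.symm hxu)] at this
    omega
  -- the adjacency matrix and its basic entries
  set A : Matrix V V ℝ := adjMat T with hAdef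
  have adj_apply : ∀ (G : SimpleGraph V) a b, adjMat G a b = if G.Adj a b then 1 else 0 :=
    fun G a b => rfl
  have e_u : ∀ z, A u z = if z = v then 1 else 0 := by
    intro z; rw [hAdef, adj_apply]
    by_cases h : z = v
    · simp [h, hadj]
    · simp [h, (hu z).not.mpr h]
  have e_u' : ∀ z, A z u = if z = v then 1 else 0 := by
    intro z; rw [hAdef, adj_apply, T.adj_comm, ← adj_apply, ← hAdef]; exact e_u z
  have e_uv : A u v = 1 := by rw [e_u]; simp
  have e_vu : A v u = 1 := by rw [e_u']; simp
  have e_uw : A u w = 0 := by rw [e_u]; simp [Ne.symm hvw]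
  have e_wu : A w u = 0 := by rw [e_u']; simp [Ne.symm hvw]
  have e_vw : A v w = 0 := by rw [hAdef, adj_apply]; simp [hAdj_vw]
  have e_wv : A w v = 0 := by rw [hAdef, adj_apply, T.adj_comm]; simp [hAdj_vw]
  have e_uu : A u u = 0 := by rw [hAdef, adj_apply]; simp
  have e_vv : A v v = 0 := by rw [hAdef, adj_apply]; simp
  have e_ww : A w w = 0 := by rw [hAdef, adj_apply]; simp
  -- B, the perturbation matrix
  set B : Matrix V V ℝ := Matrix.single u w 1 + Matrix.single w u 1
      - Matrix.single u v 1 - Matrix.single v u 1 with hBdef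
  have hA' : adjMat T' = A + B := by
    ext a b
    have hBab : B a b = (if u = a ∧ w = b then (1:ℝ) else 0) + (if w = a ∧ u = b then 1 else 0)
        - (if u = a ∧ v = b then 1 else 0) - (if v = a ∧ u = b then 1 else 0) := by
      rw [hBdef]
      simp [Matrix.single, Matrix.sub_apply, Matrix.add_apply]
    have hadj' : T'.Adj a b ↔
        ((T.Adj a b ∧ ¬((a = u ∧ b = v) ∨ (a = v ∧ b = u))) ∨ ((a = u ∧ b = w) ∨ (a = w ∧ b = u))) := by
      rw [hT', SimpleGraph.fromEdgeSet_adj]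
      constructor
      · rintro ⟨hm, hne⟩
        rcases hm with ⟨he, hne'⟩ | he
        · left
          refine ⟨he, fun hc => hne' ?_⟩
          rw [Set.mem_singleton_iff, Sym2.eq_iff]
          tauto
        · right
          rw [Set.mem_singleton_iff, Sym2.eq_iff] at he
          tauto
      · rintro (⟨he, hne⟩ | he)
        · exact ⟨Or.inl ⟨he, fun hc => hne (by rw [Set.mem_singleton_iff, Sym2.eq_iff] at hc; tauto)⟩, he.ne⟩
        · refine ⟨Or.inr ?_, ?_⟩
          · rw [Set.mem_singleton_iff, Sym2.eq_iff]; tauto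
          · rcases he with ⟨rfl, rfl⟩ | ⟨rfl, rfl⟩
            · exact huw
            · exact Ne.symm huw
    rw [Matrix.add_apply, hBab, adj_apply, hAdef, adj_apply]
    by_cases h1 : a = u ∧ b = w
    · obtain ⟨rfl, rfl⟩ := h1
      have hT'ab : T'.Adj a b := hadj'.mpr (Or.inr (Or.inl ⟨rfl, rfl⟩))
      simp [hT'ab, hAdj_uw, huv, huw, hvw, Ne.symm huv, Ne.symm huw, Ne.symm hvw]
    by_cases h2 : a = w ∧ b = u
    · obtain ⟨rfl, rfl⟩ := h2
      have hT'ab : T'.Adj a b := hadj'.mpr (Or.inr (Or.inr ⟨rfl, rfl⟩))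
      have hnadj : ¬ T.Adj a b := fun h => hAdj_uw h.symm
      simp [hT'ab, hnadj, huv, huw, hvw, Ne.symm huv, Ne.symm huw, Ne.symm hvw]
    by_cases h3 : a = u ∧ b = v
    · obtain ⟨rfl, rfl⟩ := h3
      have hnadj : ¬ T'.Adj a b := fun h => by
        rcases hadj'.mp h with ⟨-, hc⟩ | (⟨-, hc⟩ | ⟨hc, -⟩)
        · exact hc (Or.inl ⟨rfl, rfl⟩)
        · exact hvw hc
        · exact huw hc
      simp [hnadj, hadj, huv, huw, hvw, Ne.symm huv, Ne.symm huw, Ne.symm hvw]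
    by_cases h4 : a = v ∧ b = u
    · obtain ⟨rfl, rfl⟩ := h4
      have hnadj : ¬ T'.Adj a b := fun h => by
        rcases hadj'.mp h with ⟨-, hc⟩ | (⟨hc, -⟩ | ⟨hc, -⟩)
        · exact hc (Or.inr ⟨rfl, rfl⟩)
        · exact huv hc.symm
        · exact hvw hc
      simp [hnadj, hadj.symm, huv, huw, hvw, Ne.symm huv, Ne.symm huw, Ne.symm hvw]
    · have c1 : ¬(u = a ∧ w = b) := fun h => h1 ⟨h.1.symm, h.2.symm⟩
      have c2 : ¬(w = a ∧ u = b) := fun h => h2 ⟨h.1.symm, h.2.symm⟩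
      have c3 : ¬(u = a ∧ v = b) := fun h => h3 ⟨h.1.symm, h.2.symm⟩
      have c4 : ¬(v = a ∧ u = b) := fun h => h4 ⟨h.1.symm, h.2.symm⟩
      have hiff : T'.Adj a b ↔ T.Adj a b := by
        rw [hadj']
        constructor
        · rintro (⟨h, -⟩ | (h | h))
          · exact h
          · exact absurd h h1
          · exact absurd h h2
        · intro h
          exact Or.inl ⟨h, fun hc => hc.elim (fun hc => h3 hc) (fun hc => h4 hc)⟩
      rw [hiff, if_neg c1, if_neg c2, if_neg c3, if_neg c4]
      ring
  -- row/column reduction lemmas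
  have rowA : ∀ (M : Matrix V V ℝ) y, (A * M) u y = M v y := by
    intro M y
    rw [Matrix.mul_apply, Finset.sum_eq_single v]
    · rw [e_uv, one_mul]
    · intro z _ hz; rw [e_u z, if_neg hz, zero_mul]
    · intro h; exact absurd (Finset.mem_univ v) h
  have colA : ∀ (M : Matrix V V ℝ) y, (M * A) y u = M y v := by
    intro M y
    rw [Matrix.mul_apply, Finset.sum_eq_single v]
    · rw [e_vu, mul_one]
    · intro z _ hz; rw [e_u' z, if_neg hz, mul_zero]
    · intro h; exact absurd (Finset.mem_univ v) h
  -- degree sums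
  have hsum_deg : ∀ y, (∑ z, A y z * A z y) = ((T.neighborSet y).ncard : ℝ) := by
    intro y
    have h1 : ∀ z, A y z * A z y = if z ∈ (T.neighborSet y).toFinset then (1:ℝ) else 0 := by
      intro z
      by_cases h : T.Adj y z
      · have h' : T.Adj z y := h.symm
        simp [hAdef, adj_apply, h, h', Set.mem_toFinset]
      · simp [hAdef, adj_apply, h, Set.mem_toFinset]
    rw [Finset.sum_congr rfl (fun z _ => h1 z), Finset.sum_ite_mem, Finset.univ_inter,
      Finset.sum_const, Set.ncard_eq_toFinset_card']
    simp
  have hsum_vw : (∑ z, A v z * A z w) = 1 := by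
    rw [Finset.sum_eq_single x]
    · simp [hAdef, adj_apply, hvx, hxw]
    · intro z _ hzx
      by_cases h1 : T.Adj v z
      · have h2 : ¬ T.Adj z w := fun h2 => hzx (huniq z h1 h2)
        simp [hAdef, adj_apply, h2]
      · simp [hAdef, adj_apply, h1]
    · intro h; exact absurd (Finset.mem_univ x) h
  have hsum_wv : (∑ z, A w z * A z v) = 1 := by
    have : ∀ z, A w z * A z v = A v z * A z w := by
      intro z
      have c1 : A w z = A z w := by rw [hAdef, adj_apply, adj_apply, T.adj_comm]
      have c2 : A z v = A v z := by rw [hAdef, adj_apply, adj_apply, T.adj_comm]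
      rw [c1, c2]; ring
    rw [Finset.sum_congr rfl (fun z _ => this z)]
    exact hsum_vw
  -- entries of A*A
  have AA_uu : (A * A) u u = 1 := by rw [rowA, e_vu]
  have AA_uv : (A * A) u v = 0 := by rw [rowA, e_vv]
  have AA_uw : (A * A) u w = 0 := by rw [rowA, e_vw]
  have AA_vu : (A * A) v u = 0 := by rw [colA, e_vv]
  have AA_wu : (A * A) w u = 0 := by rw [colA, e_wv]
  have AA_vv : (A * A) v v = ((T.neighborSet v).ncard : ℝ) := by
    rw [Matrix.mul_apply]; exact hsum_deg v
  have AA_ww : (A * A) w w = ((T.neighborSet w).ncard : ℝ) := by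
    rw [Matrix.mul_apply]; exact hsum_deg w
  have AA_vw : (A * A) v w = 1 := by rw [Matrix.mul_apply]; exact hsum_vw
  have AA_wv : (A * A) w v = 1 := by rw [Matrix.mul_apply]; exact hsum_wv
  -- entries of A*A*A that we need
  have AAA_wu : (A * A * A) w u = 1 := by rw [colA, AA_wv]
  have AAA_vu : (A * A * A) v u = ((T.neighborSet v).ncard : ℝ) := by rw [colA, AA_vv]
  have AAA_uw : (A * A * A) u w = 1 := by
    have : A * A * A = A * (A * A) := by rw [mul_assoc]
    rw [this, rowA, AA_vw]
  have AAA_uv : (A * A * A) u v = ((T.neighborSet v).ncard : ℝ) := by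
    have : A * A * A = A * (A * A) := by rw [mul_assoc]
    rw [this, rowA, AA_vv]
  -- trace against B
  have trB : ∀ (M : Matrix V V ℝ), (M * B).trace = M w u + M u w - M v u - M u v := by
    intro M
    rw [hBdef]
    simp only [mul_sub, mul_add, Matrix.trace_sub, Matrix.trace_add, trace_mul_single]
  -- B * B
  have hBB : B * B = Matrix.single u u 1 + Matrix.single u u 1
      + Matrix.single v v 1 + Matrix.single w w 1
      - Matrix.single v w 1 - Matrix.single w v 1 := by
    rw [hBdef]
    simp only [sub_mul, add_mul, mul_sub, mul_add]
    simp [huv, huw, hvw, Ne.symm huv, Ne.symm huw, Ne.symm hvw]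
    abel
  have trB2 : ∀ (M : Matrix V V ℝ),
      (M * (B * B)).trace = M u u + M u u + M v v + M w w - M w v - M v w := by
    intro M
    rw [hBB]
    simp only [mul_sub, mul_add, Matrix.trace_sub, Matrix.trace_add, trace_mul_single]
  -- B * B * B = B + B
  have hB3 : B * B * B = B + B := by
    rw [hBB, hBdef]
    simp only [sub_mul, add_mul, mul_sub, mul_add]
    simp [huv, huw, hvw, Ne.symm huv, Ne.symm huw, Ne.symm hvw]
    abel
    -- column/row of B
  have colBv : ∀ (M : Matrix V V ℝ) a, (M * B) a v = -(M a u) := by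
    intro M a
    rw [hBdef]
    simp [mul_sub, mul_add, Matrix.sub_apply, Matrix.add_apply, mul_single_apply,
      hvw, Ne.symm huv]
  have rowBv : ∀ (M : Matrix V V ℝ) b, (B * M) v b = -(M u b) := by
    intro M b
    rw [hBdef]
    simp [sub_mul, add_mul, Matrix.sub_apply, Matrix.add_apply, single_mul_apply,
      hvw, Ne.symm huv]
  -- trace values
  have tB0 : B.trace = 0 := by
    rw [hBdef]
    simp [Matrix.trace_sub, Matrix.trace_add, stdBasis_trace, Ne.symm huw, huw,
      Ne.symm huv, huv]
  have tAB : (A * B).trace = -2 := by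
    rw [trB A, e_wu, e_uw, e_vu, e_uv]; norm_num
  have tBB4 : (B * B).trace = 4 := by
    rw [show B * B = 1 * (B * B) from (one_mul _).symm, trB2]
    simp [Matrix.one_apply, hvw, Ne.symm hvw]
    norm_num
  have tAAB : (A * A * B).trace = 0 := by
    rw [trB (A * A), AA_wu, AA_uw, AA_vu, AA_uv]; norm_num
  have tABB : (A * (B * B)).trace = 0 := by
    rw [trB2 A, e_uu, e_vv, e_ww, e_wv, e_vw]; norm_num
  have tBBB : (B * B * B).trace = 0 := by
    rw [hB3, Matrix.trace_add, tB0]; norm_num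
  have tAAAB : (A * A * A * B).trace = 2 - 2 * ((T.neighborSet v).ncard : ℝ) := by
    rw [trB (A * A * A), AAA_wu, AAA_uw, AAA_vu, AAA_uv]; ring
  have tAABB : ((A * A) * (B * B)).trace
      = ((T.neighborSet v).ncard : ℝ) + ((T.neighborSet w).ncard : ℝ) := by
    rw [trB2 (A * A), AA_uu, AA_vv, AA_ww, AA_wv, AA_vw]; ring
  have tABAB : (A * B * A * B).trace = 2 := by
    have n1 : (A * B * A) w u = 0 := by rw [colA (A * B) w, colBv A w, e_wu, neg_zero]
    have n2 : (A * B * A) v u = -1 := by rw [colA (A * B) v, colBv A v, e_vu]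
    have n3 : (A * B * A) u w = 0 := by
      rw [show A * B * A = A * (B * A) from by rw [mul_assoc], rowA (B * A) w, rowBv A w,
        e_uw, neg_zero]
    have n4 : (A * B * A) u v = -1 := by
      rw [show A * B * A = A * (B * A) from by rw [mul_assoc], rowA (B * A) v, rowBv A v, e_uv]
    rw [trB (A * B * A), n1, n3, n2, n4]; norm_num
  have tABBB : (A * B * B * B).trace = -4 := by
    rw [show A * B * B * B = A * (B * B * B) from by noncomm_ring, hB3, mul_add,
      Matrix.trace_add, tAB]
    norm_num
  have tBBBB : (B * B * B * B).trace = 8 := by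
    rw [show B * B * B * B = (B * B * B) * B from rfl, hB3, add_mul, Matrix.trace_add, tBB4]
    norm_num
    -- the spectral moments
  have hS : ∀ k, spectralMoment T k = (A ^ k).trace := fun k => rfl
  have hS' : ∀ k, spectralMoment T' k = ((A + B) ^ k).trace := by
    intro k
    rw [spectralMoment, hA']
  have m0 : spectralMoment T 0 = spectralMoment T' 0 := by
    rw [hS, hS', pow_zero, pow_zero]
  have m1 : spectralMoment T 1 = spectralMoment T' 1 := by
    rw [hS, hS', pow_one, pow_one, Matrix.trace_add, tB0, add_zero]
  have m2 : spectralMoment T 2 = spectralMoment T' 2 := by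
    rw [hS, hS']
    rw [show (A + B) ^ 2 = A ^ 2 + (A * B + (B * A + B * B)) from by noncomm_ring]
    simp only [Matrix.trace_add]
    rw [Matrix.trace_mul_comm B A, tAB, tBB4]
    ring
  have m3 : spectralMoment T 3 = spectralMoment T' 3 := by
    rw [hS, hS']
    rw [show (A + B) ^ 3 = A ^ 3 + (A * A * B + (A * B * A + (B * A * A +
      (A * (B * B) + (B * A * B + ((B * B) * A + B * B * B)))))) from by noncomm_ring]
    simp only [Matrix.trace_add]
    have c1 : (A * B * A).trace = (A * A * B).trace := by
      rw [show A * B * A = (A * B) * A from rfl, Matrix.trace_mul_comm (A * B) A,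
        show A * (A * B) = A * A * B from by noncomm_ring]
    have c2 : (B * A * A).trace = (A * A * B).trace := by
      rw [show B * A * A = B * (A * A) from by noncomm_ring, Matrix.trace_mul_comm B (A * A)]
    have c3 : (B * A * B).trace = (A * (B * B)).trace := by
      rw [show B * A * B = B * (A * B) from by noncomm_ring, Matrix.trace_mul_comm B (A * B),
        show (A * B) * B = A * (B * B) from by noncomm_ring]
    have c4 : ((B * B) * A).trace = (A * (B * B)).trace := Matrix.trace_mul_comm (B * B) A
    rw [c1, c2, c3, c4, tAAB, tABB, tBBB]
    ring
  have m4 : spectralMoment T' 4 = spectralMoment T 4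
      + 4 * (((T.neighborSet w).ncard : ℝ) - ((T.neighborSet v).ncard : ℝ) + 1) := by
    rw [hS, hS']
    rw [show (A + B) ^ 4 = A ^ 4 + (A * A * A * B + (A * A * B * A + (A * B * A * A +
      (B * A * A * A + (A * A * B * B + (A * B * B * A + (B * A * A * B +
      (B * B * A * A + (A * B * A * B + (B * A * B * A + (A * B * B * B +
      (B * A * B * B + (B * B * A * B + (B * B * B * A + B * B * B * B))))))))))))))
      from by noncomm_ring]
    simp only [Matrix.trace_add]
    have w1 : (A * A * B * A).trace = (A * A * A * B).trace := by
      rw [Matrix.trace_mul_comm (A * A * B) A,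
        show A * (A * A * B) = A * A * A * B from by noncomm_ring]
    have w2 : (A * B * A * A).trace = (A * A * A * B).trace := by
      rw [show A * B * A * A = (A * B) * (A * A) from by noncomm_ring,
        Matrix.trace_mul_comm (A * B) (A * A),
        show (A * A) * (A * B) = A * A * A * B from by noncomm_ring]
    have w3 : (B * A * A * A).trace = (A * A * A * B).trace := by
      rw [show B * A * A * A = B * (A * A * A) from by noncomm_ring,
        Matrix.trace_mul_comm B (A * A * A)]
    have w4 : (A * A * B * B).trace = ((A * A) * (B * B)).trace := by
      rw [show A * A * B * B = (A * A) * (B * B) from by noncomm_ring]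
    have w5 : (A * B * B * A).trace = ((A * A) * (B * B)).trace := by
      rw [show A * B * B * A = (A * (B * B)) * A from by noncomm_ring,
        Matrix.trace_mul_comm (A * (B * B)) A,
        show A * (A * (B * B)) = (A * A) * (B * B) from by noncomm_ring]
    have w6 : (B * A * A * B).trace = ((A * A) * (B * B)).trace := by
      rw [show B * A * A * B = B * ((A * A) * B) from by noncomm_ring,
        Matrix.trace_mul_comm B ((A * A) * B),
        show ((A * A) * B) * B = (A * A) * (B * B) from by noncomm_ring]
    have w7 : (B * B * A * A).trace = ((A * A) * (B * B)).trace := by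
      rw [show B * B * A * A = (B * B) * (A * A) from by noncomm_ring,
        Matrix.trace_mul_comm (B * B) (A * A)]
    have w8 : (B * A * B * A).trace = (A * B * A * B).trace := by
      rw [show B * A * B * A = B * (A * B * A) from by noncomm_ring,
        Matrix.trace_mul_comm B (A * B * A)]
    have w9 : (B * A * B * B).trace = (A * B * B * B).trace := by
      rw [show B * A * B * B = B * (A * B * B) from by noncomm_ring,
        Matrix.trace_mul_comm B (A * B * B)]
    have w10 : (B * B * A * B).trace = (A * B * B * B).trace := by
      rw [show B * B * A * B = (B * B) * (A * B) from by noncomm_ring,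
        Matrix.trace_mul_comm (B * B) (A * B),
        show (A * B) * (B * B) = A * B * B * B from by noncomm_ring]
    have w11 : (B * B * B * A).trace = (A * B * B * B).trace := by
      rw [Matrix.trace_mul_comm (B * B * B) A,
        show A * (B * B * B) = A * B * B * B from by noncomm_ring]
    rw [w1, w2, w3, w4, w5, w6, w7, w8, w9, w10, w11,
      tAAAB, tAABB, tABAB, tABBB, tBBBB]
    ring
  have hlt : spectralMoment T 4 < spectralMoment T' 4 := by
    have hc : ((T.neighborSet v).ncard : ℝ) ≤ ((T.neighborSet w).ncard : ℝ) :=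
      Nat.cast_le.mpr hdeg
    rw [m4]
    linarith
  have hmom : ∀ i < 4, spectralMoment T i = spectralMoment T' i := by
    intro i hi
    interval_cases i
    · exact m0
    · exact m1
    · exact m2
    · exact m3
  refine ⟨hmom, hlt, 4, by norm_num, by omega, hmom, hlt⟩
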